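/- Lemma A.3, Switch_{12} case: let n ≥ 4 be even and x, y ∈ (ℝ_{>0})^n (indices modulo n). Let ī denote the involution pairing (1,2), (3,4), …, (n−1,n), i.e. ī = i+1 for i odd and ī = i−1 for i even. Set α_i = x_i + y_ī, x**_i = x_ī·α_{ī+1}/α_ī and y**_i = y_ī·α_{i+1}/α_i. Then Q_i(x**, y**) = Q_i(x,y) for every even i, and Q_i(x**, y**) = (x_{i+1}+y_i)·(x_i·Q_{i+1}(x,y) + y_{i+1}·Q_{i−1}(x,y)) / ((x_i+y_{i+1})·(x_{i+2}+y_{i+3})) for every odd i. -/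

import Mathlib

/- Tropical (geometric-lift) setting for the combinatorial R- and K-matrices of
Kuniba–Okado–Yamada, "Box-Ball System with Reflecting End", Appendix A.
Vectors are real-valued, indexed by `ZMod n` (coordinates modulo `n`), and
`Qr x y i` is the subtraction-free polynomial
`Q_i(x,y) = Σ_{k=1}^{n} (Π_{j=1}^{k−1} x_{i+j}) (Π_{j=k+1}^{n} y_{i+j})`,
the geometric lift (by `(min,+) → (+,×)`) of the piecewise-linear energy. -/

namespace BBST

abbrev W (n : ℕ) := ZMod n → ℝ

variable {n : ℕ}

/-- The tropical energy polynomial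
`Q_i(x,y) = Σ_{k=1}^{n} (Π_{j=1}^{k−1} x_{i+j}) · (Π_{j=k+1}^{n} y_{i+j})`. -/
def Qr (x y : W n) (i : ZMod n) : ℝ :=
  ∑ k ∈ Finset.range n,
    (∏ j ∈ Finset.range k, x (i + (j : ZMod n) + 1)) *
      ∏ j ∈ Finset.Ico (k + 1) n, y (i + (j : ZMod n) + 1)

end BBST

namespace BBST

def Mm (x y : W n) (j : ZMod n) : Matrix (Fin 2) (Fin 2) ℝ := !![y j, 0; 1, x j]

lemma valmod (hdvd : 2 ∣ n) [NeZero n] (i : ZMod n) (k : ℕ) :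
    (i + (k : ZMod n)).val % 2 = (i.val + k) % 2 := by
  rw [ZMod.val_add, ZMod.val_natCast]
  have h1 := Nat.mod_mod_of_dvd (i.val + k % n) hdvd
  have h2 := Nat.mod_mod_of_dvd k hdvd
  omega

lemma prodM (x y : W n) (i : ZMod n) (m : ℕ) :
    ((List.range m).map (fun j : ℕ => Mm x y (i + (j : ZMod n) + 1))).prod =
      !![∏ j ∈ Finset.range m, y (i + (j : ZMod n) + 1), 0;
         ∑ k ∈ Finset.range m,
           (∏ j ∈ Finset.range k, x (i + (j : ZMod n) + 1)) *
             ∏ j ∈ Finset.Ico (k + 1) m, y (i + (j : ZMod n) + 1),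
         ∏ j ∈ Finset.range m, x (i + (j : ZMod n) + 1)] := by
  induction m with
  | zero => simp [Matrix.one_fin_two]
  | succ m ih =>
      rw [List.range_succ, List.map_append, List.prod_append, ih]
      simp only [List.map_cons, List.map_nil, List.prod_cons, List.prod_nil, mul_one]
      have hsum : ∑ k ∈ Finset.range (m+1),
           (∏ j ∈ Finset.range k, x (i + (j : ZMod n) + 1)) *
             ∏ j ∈ Finset.Ico (k + 1) (m+1), y (i + (j : ZMod n) + 1) =
          (∑ k ∈ Finset.range m,
           (∏ j ∈ Finset.range k, x (i + (j : ZMod n) + 1)) *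
             ∏ j ∈ Finset.Ico (k + 1) m, y (i + (j : ZMod n) + 1)) * y (i + (m : ZMod n) + 1)
            + ∏ j ∈ Finset.range m, x (i + (j : ZMod n) + 1) := by
        rw [Finset.sum_range_succ, Finset.sum_mul]
        have h2 : ∀ k ∈ Finset.range m,
            ((∏ j ∈ Finset.range k, x (i + (j : ZMod n) + 1)) *
              ∏ j ∈ Finset.Ico (k + 1) (m+1), y (i + (j : ZMod n) + 1)) =
            ((∏ j ∈ Finset.range k, x (i + (j : ZMod n) + 1)) *
              ∏ j ∈ Finset.Ico (k + 1) m, y (i + (j : ZMod n) + 1)) * y (i + (m : ZMod n) + 1) := by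
          intro k hk
          rw [Finset.prod_Ico_succ_top (by simp at hk; omega : k + 1 ≤ m)]
          ring
        rw [Finset.sum_congr rfl h2]
        simp
      rw [Mm, Matrix.mul_fin_two, hsum, Finset.prod_range_succ, Finset.prod_range_succ]
      ext a b
      fin_cases a <;> fin_cases b <;> simp <;> ring

lemma cyc (f : ZMod n → ℝ) [NeZero n] (i : ZMod n) :
    ∏ j ∈ Finset.range n, f (i + (j : ZMod n) + 1) = ∏ k : ZMod n, f k := by
  refine Finset.prod_nbij' (fun j => i + (j : ZMod n) + 1) (fun k => (k - i - 1).val) ?_ ?_ ?_ ?_ ?_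
  · intro a ha; exact Finset.mem_univ _
  · intro k hk; simp [ZMod.val_lt]
  · intro j hj
    simp only [Finset.mem_range] at hj
    show (i + (j:ZMod n) + 1 - i - 1).val = j
    have : i + (j:ZMod n) + 1 - i - 1 = (j : ZMod n) := by ring
    rw [this, ZMod.val_natCast_of_lt hj]
  · intro k hk
    show i + ((k - i - 1).val : ZMod n) + 1 = k
    rw [ZMod.natCast_val, ZMod.cast_id]
    ring
  · intro a ha; rfl

lemma shiftkey (x y : W n) [NeZero n] (i : ZMod n) :
    Mm x y (i + 1) * ((List.range n).map (fun j : ℕ => Mm x y ((i+1) + (j : ZMod n) + 1))).prod =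
    ((List.range n).map (fun j : ℕ => Mm x y (i + (j : ZMod n) + 1))).prod * Mm x y (i + 1) := by
  have h1 : ((List.range (n+1)).map (fun j : ℕ => Mm x y (i + (j : ZMod n) + 1))).prod =
      ((List.range n).map (fun j : ℕ => Mm x y (i + (j : ZMod n) + 1))).prod * Mm x y (i + 1) := by
    rw [List.range_succ, List.map_append, List.prod_append]
    simp [ZMod.natCast_self]
  have h2 : ((List.range (n+1)).map (fun j : ℕ => Mm x y (i + (j : ZMod n) + 1))).prod =
      Mm x y (i + 1) * ((List.range n).map (fun j : ℕ => Mm x y ((i+1) + (j : ZMod n) + 1))).prod := by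
    rw [List.range_succ_eq_map, List.map_cons, List.prod_cons]
    congr 1
    · norm_num
    · rw [List.map_map]
      have hf : ((fun j : ℕ => Mm x y (i + (j:ZMod n) + 1)) ∘ Nat.succ) =
          (fun j : ℕ => Mm x y ((i+1) + (j:ZMod n) + 1)) := by
        funext j
        simp only [Function.comp_apply, Nat.succ_eq_add_one]
        congr 1
        push_cast
        ring
      rw [hf]
  rw [← h1, ← h2]

lemma recur (x y : W n) [NeZero n] (i : ZMod n) :
    x (i+1) * Qr x y (i+1) + ∏ k : ZMod n, y k =
      y (i+1) * Qr x y i + ∏ k : ZMod n, x k := by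
  have key := shiftkey x y i
  rw [prodM, prodM, cyc x, cyc x, cyc y, cyc y] at key
  have hq1 : (∑ k ∈ Finset.range n,
      (∏ j ∈ Finset.range k, x ((i+1) + (j : ZMod n) + 1)) *
        ∏ j ∈ Finset.Ico (k + 1) n, y ((i+1) + (j : ZMod n) + 1)) = Qr x y (i+1) := rfl
  have hq0 : (∑ k ∈ Finset.range n,
      (∏ j ∈ Finset.range k, x (i + (j : ZMod n) + 1)) *
        ∏ j ∈ Finset.Ico (k + 1) n, y (i + (j : ZMod n) + 1)) = Qr x y i := rfl
  rw [hq1, hq0, Mm, Matrix.mul_fin_two, Matrix.mul_fin_two] at key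
  have := congrFun (congrFun key 1) 0
  simp [Matrix.cons_val_one, Matrix.cons_val_zero] at this
  linarith [this]


/-- Lemma A.3, Switch₁₂ case: let `n ≥ 4` be even and
`x, y ∈ (ℝ_{>0})^n`.  With the involution `ī` pairing `(1,2), (3,4), …, (n−1,n)`,
`α_i = x_i + y_ī`, `x**_i = x_ī·α_{ī+1}/α_ī` and `y**_i = y_ī·α_{i+1}/α_i`, one has
`Q_i(x**, y**) = Q_i(x,y)` for every even `i`, and
`Q_i(x**, y**) = (x_{i+1}+y_i)·(x_i·Q_{i+1} + y_{i+1}·Q_{i−1}) / ((x_i+y_{i+1})·(x_{i+2}+y_{i+3}))`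
for every odd `i`. -/
theorem lemmaA3_switch12 (n : ℕ) (hn : 4 ≤ n) (hev : Even n) (x y : W n)
    (hx : ∀ i, 0 < x i) (hy : ∀ i, 0 < y i)
    (bar : ZMod n → ZMod n) (hbar : bar = fun i => if i.val % 2 = 1 then i + 1 else i - 1)
    (α : ZMod n → ℝ) (hα : α = fun i => x i + y (bar i))
    (xss yss : W n)
    (hxss : xss = fun i => x (bar i) * α (bar i + 1) / α (bar i))
    (hyss : yss = fun i => y (bar i) * α (i + 1) / α i) :
    (∀ i : ZMod n, i.val % 2 = 0 → Qr xss yss i = Qr x y i) ∧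
      ∀ i : ZMod n, i.val % 2 = 1 →
        Qr xss yss i =
          (x (i + 1) + y i) * (x i * Qr x y (i + 1) + y (i + 1) * Qr x y (i - 1)) /
            ((x i + y (i + 1)) * (x (i + 2) + y (i + 3))) := by
  haveI : NeZero n := ⟨by omega⟩
  have hdvd : 2 ∣ n := hev.two_dvd
  have hαpos : ∀ i, 0 < α i := by intro i; rw [hα]; exact add_pos (hx i) (hy _)
  have hαne : ∀ i, α i ≠ 0 := fun i => (hαpos i).ne'
  -- parity facts
  have hv1 : ∀ i : ZMod n, (i + 1).val % 2 = (i.val + 1) % 2 := by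
    intro i
    have := valmod hdvd i 1
    simpa using this
  have hvm1 : ∀ i : ZMod n, (i - 1).val % 2 = (i.val + 1) % 2 := by
    intro i
    have hcast : ((n - 1 : ℕ) : ZMod n) = -1 := by
      have h0 : ((n : ℕ) : ZMod n) = 0 := ZMod.natCast_self n
      rw [Nat.cast_sub (by omega : 1 ≤ n), h0, Nat.cast_one]
      ring
    have h1 : i - 1 = i + ((n - 1 : ℕ) : ZMod n) := by rw [hcast]; ring
    rw [h1, valmod hdvd]
    omega
  have bar_odd : ∀ i : ZMod n, i.val % 2 = 1 → bar i = i + 1 := by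
    intro i hi; rw [hbar]; simp [hi]
  have bar_even : ∀ i : ZMod n, i.val % 2 = 0 → bar i = i - 1 := by
    intro i hi; rw [hbar]; simp [hi]
  -- evaluation of xss, yss at odd/even positions
  have hxsso : ∀ m : ZMod n, m.val % 2 = 1 → xss m = x (m+1) * α (m+2) / α (m+1) := by
    intro m hm
    rw [hxss]
    simp only
    rw [bar_odd m hm]
    ring_nf
  have hysso : ∀ m : ZMod n, m.val % 2 = 1 → yss m = y (m+1) * α (m+1) / α m := by
    intro m hm
    rw [hyss]
    simp only
    rw [bar_odd m hm]
  have hxsse : ∀ m : ZMod n, m.val % 2 = 0 → xss m = x (m-1) * α m / α (m-1) := by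
    intro m hm
    rw [hxss]
    simp only
    rw [bar_even m hm]
    ring_nf
  have hysse : ∀ m : ZMod n, m.val % 2 = 0 → yss m = y (m-1) * α (m+1) / α m := by
    intro m hm
    rw [hyss]
    simp only
    rw [bar_even m hm]
  have hαo : ∀ m : ZMod n, m.val % 2 = 1 → α m = x m + y (m+1) := by
    intro m hm; rw [hα]; simp only; rw [bar_odd m hm]
  have hαe : ∀ m : ZMod n, m.val % 2 = 0 → α m = x m + y (m-1) := by
    intro m hm; rw [hα]; simp only; rw [bar_even m hm]
  -- pair lemma
  have pair : ∀ m : ZMod n, m.val % 2 = 1 →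
      Mm xss yss m * Mm xss yss (m+1) = (α (m+2) / α m) • (Mm x y m * Mm x y (m+1)) := by
    intro m hm
    have hm1 : (m+1).val % 2 = 0 := by rw [hv1]; omega
    have e1 : xss m = x (m+1) * α (m+2) / α (m+1) := hxsso m hm
    have e2 : yss m = y (m+1) * α (m+1) / α m := hysso m hm
    have e3 : xss (m+1) = x m * α (m+1) / α m := by
      have := hxsse (m+1) hm1; rw [this]; simp
    have e4 : yss (m+1) = y m * α (m+2) / α (m+1) := by
      have := hysse (m+1) hm1; rw [this]; simp; ring_nf
    have a1 : α m = x m + y (m+1) := hαo m hm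
    have a2 : α (m+1) = x (m+1) + y m := by
      have := hαe (m+1) hm1; rw [this]; simp
    have p1 : x m + y (m+1) ≠ 0 := (add_pos (hx m) (hy (m+1))).ne'
    have p2 : x (m+1) + y m ≠ 0 := (add_pos (hx (m+1)) (hy m)).ne'
    ext a b
    fin_cases a <;> fin_cases b <;>
      simp only [Mm, Matrix.mul_fin_two, e1, e2, e3, e4, a1, a2, Matrix.smul_apply,
        Matrix.cons_val', Matrix.cons_val_zero, Matrix.cons_val_one, Matrix.head_cons,
        Matrix.empty_val', Matrix.cons_val_fin_one, Matrix.head_fin_const, smul_eq_mul,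
        Matrix.of_apply, Fin.zero_eta, Fin.mk_one] <;>
      field_simp <;> ring
  -- telescoping induction for even starting index
  have evkey : ∀ i : ZMod n, i.val % 2 = 0 → ∀ m : ℕ,
      ((List.range (2*m)).map (fun j : ℕ => Mm xss yss (i + (j : ZMod n) + 1))).prod =
        (α (i + ((2*m : ℕ) : ZMod n) + 1) / α (i + 1)) •
          ((List.range (2*m)).map (fun j : ℕ => Mm x y (i + (j : ZMod n) + 1))).prod := by
    intro i hi m
    induction m with
    | zero => simp [div_self (hαne (i+1))]
    | succ m ih =>
        have hr : List.range (2*(m+1)) = (List.range (2*m) ++ [2*m]) ++ [2*m+1] := by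
          have h2 : 2*(m+1) = (2*m+1)+1 := by omega
          rw [h2, List.range_succ, List.range_succ]
        rw [hr]
        simp only [List.map_append, List.prod_append, List.map_cons, List.map_nil,
          List.prod_cons, List.prod_nil, mul_one]
        set m' : ZMod n := i + ((2*m : ℕ) : ZMod n) + 1 with hm'def
        have hm'odd : m'.val % 2 = 1 := by
          have h1 : m' = i + ((2*m+1 : ℕ) : ZMod n) := by rw [hm'def]; push_cast; ring
          rw [h1, valmod hdvd]
          omega
        have hlast : i + ((2*m+1 : ℕ) : ZMod n) + 1 = m' + 1 := by rw [hm'def]; push_cast; ring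
        have htarg : i + ((2*(m+1) : ℕ) : ZMod n) + 1 = m' + 2 := by rw [hm'def]; push_cast; ring
        rw [hlast, htarg, mul_assoc, pair m' hm'odd, ih]
        rw [Matrix.smul_mul, Matrix.mul_smul, smul_smul]
        congr 1
        · rw [div_mul_div_comm, mul_comm (α m'), mul_div_mul_right _ _ (hαne m')]
        · rw [mul_assoc]
  -- even case
  have evenpart : ∀ i : ZMod n, i.val % 2 = 0 → Qr xss yss i = Qr x y i := by
    intro i hi
    have h := evkey i hi (n/2)
    rw [Nat.mul_div_cancel' hdvd] at h
    rw [ZMod.natCast_self] at h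
    have hsc : α (i + 0 + 1) / α (i + 1) = 1 := by
      rw [add_zero]
      exact div_self (hαne _)
    rw [hsc, one_smul, prodM, prodM] at h
    have h10 := congrFun (congrFun h 1) 0
    simpa [Qr] using h10
  refine ⟨evenpart, ?_⟩
  -- invariance of the total products
  have barinv : Function.Involutive bar := by
    intro k
    rcases Nat.mod_two_eq_zero_or_one k.val with h | h
    · rw [bar_even k h]
      have h1 : (k-1).val % 2 = 1 := by rw [hvm1]; omega
      rw [bar_odd _ h1]
      ring
    · rw [bar_odd k h]
      have h1 : (k+1).val % 2 = 0 := by rw [hv1]; omega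
      rw [bar_even _ h1]
      ring
  have hαprodne : ∏ k : ZMod n, α k ≠ 0 := Finset.prod_ne_zero_iff.2 fun k _ => hαne k
  have hXinv : ∏ k : ZMod n, xss k = ∏ k : ZMod n, x k := by
    rw [hxss]
    simp only
    rw [Finset.prod_div_distrib, Finset.prod_mul_distrib]
    have hb := barinv.bijective
    have hb1 : Function.Bijective (fun k : ZMod n => bar k + 1) :=
      (Equiv.addRight (1 : ZMod n)).bijective.comp hb
    rw [hb.prod_comp x, hb.prod_comp α, hb1.prod_comp α]
    rw [mul_div_assoc, div_self hαprodne, mul_one]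
  have hYinv : ∏ k : ZMod n, yss k = ∏ k : ZMod n, y k := by
    rw [hyss]
    simp only
    rw [Finset.prod_div_distrib, Finset.prod_mul_distrib]
    have hb := barinv.bijective
    have hb1 : Function.Bijective (fun k : ZMod n => k + 1) :=
      (Equiv.addRight (1 : ZMod n)).bijective
    rw [hb.prod_comp y, hb1.prod_comp α]
    rw [mul_div_assoc, div_self hαprodne, mul_one]
  -- odd case
  intro i hi
  have hie : (i+1).val % 2 = 0 := by rw [hv1]; omega
  have hQ1 : Qr xss yss (i+1) = Qr x y (i+1) := evenpart (i+1) hie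
  have haux1 : i + 1 - 1 = i := by ring
  have haux2 : i + 1 + 1 = i + 2 := by ring
  have haux3 : i - 1 + 1 = i := by ring
  have haux4 : i + 2 + 1 = i + 3 := by ring
  have exss : xss (i+1) = x i * α (i+1) / α i := by
    rw [hxsse (i+1) hie, haux1]
  have eyss : yss (i+1) = y i * α (i+2) / α (i+1) := by
    rw [hysse (i+1) hie, haux1, haux2]
  have aα0 : α i = x i + y (i+1) := hαo i hi
  have aα1 : α (i+1) = x (i+1) + y i := by rw [hαe (i+1) hie, haux1]
  have hi2 : (i+2).val % 2 = 1 := by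
    have h2 : i + 2 = i + ((2:ℕ) : ZMod n) := by push_cast; ring
    rw [h2, valmod hdvd]
    omega
  have aα2 : α (i+2) = x (i+2) + y (i+3) := by rw [hαo (i+2) hi2, haux4]
  have r1 := recur x y i
  have r2 := recur x y (i-1)
  rw [haux3] at r2
  have r3 := recur xss yss i
  rw [hQ1, hXinv, hYinv, exss, eyss] at r3
  set A := Qr x y (i+1)
  set B := Qr x y (i-1)
  set C := Qr x y i
  set XX := ∏ k : ZMod n, x k
  set YY := ∏ k : ZMod n, y k
  have hdag : x i * α (i+1) * A - α i * (XX - YY) = y i * (x i * A + y (i+1) * B) := by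
    rw [aα0, aα1]
    linear_combination (x i) * r1 + (y (i+1)) * r2
  have r3' : (x i * α (i+1) * α (i+1)) * A + (α i * α (i+1)) * YY =
      (y i * α (i+2) * α i) * Qr xss yss i + (α i * α (i+1)) * XX := by
    have hni := hαne i
    have hni1 := hαne (i+1)
    field_simp at r3
    linear_combination r3
  have hyne : y i ≠ 0 := (hy i).ne'
  have E : (α (i+2) * α i) * Qr xss yss i = α (i+1) * (x i * A + y (i+1) * B) := by
    apply mul_left_cancel₀ hyne
    linear_combination (-1 : ℝ) * r3' + α (i+1) * hdag
  have hD : (x i + y (i+1)) * (x (i+2) + y (i+3)) ≠ 0 :=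
    (mul_pos (add_pos (hx i) (hy (i+1))) (add_pos (hx (i+2)) (hy (i+3)))).ne'
  rw [eq_div_iff hD]
  rw [aα0, aα1, aα2] at E
  linear_combination E

end BBST
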